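/- Let G be a semi-Markovian causal graph with observed variables V, let 𝔸 be a finite collection of subsets of V, and let X and Y be two disjoint subsets of V. The causal effect of X on Y is g-identifiable from (𝔸, G) if and only if Q[Anc_Y(G_{V∖X})] is g-identifiable from (𝔸, G). -/

import Mathlib

open scoped Classical

/-- A semi-Markovian causal graph: a DAG over a finite vertex set partitioned into
observed (`obs`) and unobserved (`unobs`) variables, where every unobserved variable
has no parents and exactly two (distinct, observed) children. -/
structure CausalGraph (ν : Type) [Fintype ν] [DecidableEq ν] where
  obs : Finset ν
  unobs : Finset ν
  disj : Disjoint obs unobs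
  E : ν → ν → Prop
  edge_mem : ∀ x y, E x y → x ∈ obs ∪ unobs ∧ y ∈ obs ∪ unobs
  acyclic : ∀ x, ¬ Relation.TransGen E x x
  unobs_no_parent : ∀ u ∈ unobs, ∀ w, ¬ E w u
  unobs_two_children : ∀ u ∈ unobs,
    ∃ a b, a ≠ b ∧ a ∈ obs ∧ b ∈ obs ∧ (∀ w, E u w ↔ w = a ∨ w = b)

namespace CausalGraph

variable {ν : Type} [Fintype ν] [DecidableEq ν]

def verts (G : CausalGraph ν) : Finset ν := G.obs ∪ G.unobs

/-- A structural equation model over the causal graph `G`: finite nonempty domains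
(encoded as finite sets of naturals), a pmf for each unobserved variable, and a
conditional pmf (given an assignment to the parents) for each observed variable. -/
structure SEM (G : CausalGraph ν) where
  dom : ν → Finset ℕ
  dom_ne : ∀ x, (dom x).Nonempty
  pU : ν → ℕ → ℝ
  pU_nonneg : ∀ u n, 0 ≤ pU u n
  pU_sum : ∀ u ∈ G.unobs, ∑ n ∈ dom u, pU u n = 1
  pO : ν → ℕ → (ν → ℕ) → ℝ
  pO_nonneg : ∀ x n pa, 0 ≤ pO x n pa
  pO_sum : ∀ x ∈ G.obs, ∀ pa : ν → ℕ, ∑ n ∈ dom x, pO x n pa = 1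
  pO_par : ∀ x n (pa pa' : ν → ℕ), (∀ p, G.E p x → pa p = pa' p) → pO x n pa = pO x n pa'

namespace SEM

variable {G : CausalGraph ν}

/-- Full assignments: all variables of `G` get values in their domains
(non-vertices are pinned to `0`). -/
noncomputable def fullAssign (M : SEM G) : Finset (ν → ℕ) :=
  Fintype.piFinset (fun x => if x ∈ G.verts then M.dom x else {0})

/-- Observed assignments `dom(V)`: observed variables get values in their domains
(all other coordinates are pinned to `0`). -/
noncomputable def obsAssign (M : SEM G) : Finset (ν → ℕ) :=
  Fintype.piFinset (fun x => if x ∈ G.obs then M.dom x else {0})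

/-- `Q^M[S](v) = Σ_u Π_{X ∈ S} P(x | pa_G(X)) Π_{U} P(u)`. -/
noncomputable def Q (M : SEM G) (S : Finset ν) (v : ν → ℕ) : ℝ :=
  ∑ w ∈ M.fullAssign.filter (fun w => ∀ x ∈ G.obs, w x = v x),
    (∏ x ∈ S, M.pO x (w x) w) * ∏ u ∈ G.unobs, M.pU u (w u)

/-- The observational distribution `P^M(v) = Q^M[V](v)`. -/
noncomputable def P (M : SEM G) (v : ν → ℕ) : ℝ := M.Q G.obs v

/-- Post-interventional probability `P^M_x(y)`: sum of `Q^M[V∖X]` over all observed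
realizations consistent with `x` on `X` and `y` on `Y`. -/
noncomputable def Px (M : SEM G) (X : Finset ν) (x : ν → ℕ) (Y : Finset ν) (y : ν → ℕ) : ℝ :=
  ∑ v ∈ M.obsAssign.filter (fun v => (∀ i ∈ X, v i = x i) ∧ (∀ i ∈ Y, v i = y i)),
    M.Q (G.obs \ X) v

/-- `M ∈ 𝕄⁺(G)`: strictly positive observational distribution. -/
def positive (M : SEM G) : Prop := ∀ v ∈ M.obsAssign, 0 < M.P v

end SEM

/-- The causal effect of `X` on `Y` is identifiable from `G`. -/
def Identifiable (G : CausalGraph ν) (X Y : Finset ν) : Prop :=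
  ∀ M₁ M₂ : SEM G, M₁.positive → M₂.positive →
    (∀ i ∈ G.obs, M₁.dom i = M₂.dom i) →
    (∀ v ∈ M₁.obsAssign, M₁.P v = M₂.P v) →
    ∀ x y : ν → ℕ, (∀ i ∈ X, x i ∈ M₁.dom i) → (∀ i ∈ Y, y i ∈ M₁.dom i) →
      M₁.Px X x Y y = M₂.Px X x Y y

/-- `Q[S]` is identifiable from `G`. -/
def QIdentifiable (G : CausalGraph ν) (S : Finset ν) : Prop :=
  Identifiable G (G.obs \ S) S

/-- The causal effect of `X` on `Y` is g-identifiable from `(𝔸, G)`. -/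
def GIdentifiable (G : CausalGraph ν) (𝔸 : Finset (Finset ν)) (X Y : Finset ν) : Prop :=
  ∀ M₁ M₂ : SEM G, M₁.positive → M₂.positive →
    (∀ i ∈ G.obs, M₁.dom i = M₂.dom i) →
    (∀ A ∈ 𝔸, ∀ v ∈ M₁.obsAssign, M₁.Q A v = M₂.Q A v) →
    ∀ x y : ν → ℕ, (∀ i ∈ X, x i ∈ M₁.dom i) → (∀ i ∈ Y, y i ∈ M₁.dom i) →
      M₁.Px X x Y y = M₂.Px X x Y y

/-- `Q[S]` is g-identifiable from `(𝔸, G)`. -/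
def QGIdentifiable (G : CausalGraph ν) (𝔸 : Finset (Finset ν)) (S : Finset ν) : Prop :=
  GIdentifiable G 𝔸 (G.obs \ S) S

/-- Bidirected edge of `G_X` between `a` and `b`: distinct members of `X` sharing an
unobserved parent (whose two children then necessarily both lie in `X`). -/
def biEdge (G : CausalGraph ν) (X : Finset ν) (a b : ν) : Prop :=
  a ≠ b ∧ a ∈ X ∧ b ∈ X ∧ ∃ u ∈ G.unobs, G.E u a ∧ G.E u b

/-- `X` is a single c-component of `G`. -/
def SingleC (G : CausalGraph ν) (X : Finset ν) : Prop :=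
  X.Nonempty ∧ ∀ a ∈ X, ∀ b ∈ X, Relation.ReflTransGen (G.biEdge X) a b

/-- The c-components of `S`: connected components of the bidirected part of `G_S`. -/
noncomputable def cComponents (G : CausalGraph ν) (S : Finset ν) : Finset (Finset ν) :=
  S.image (fun a => S.filter (fun b => Relation.ReflTransGen (G.biEdge S) a b))

/-- Directed edge of `G_X` (both endpoints in `X`). -/
def dirEdgeIn (G : CausalGraph ν) (X : Finset ν) (a b : ν) : Prop :=
  a ∈ X ∧ b ∈ X ∧ G.E a b

/-- `Anc_Y(G_X)`: members of `X` having a directed path in `G_X` to some member of `Y`. -/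
noncomputable def ancIn (G : CausalGraph ν) (X Y : Finset ν) : Finset ν :=
  X.filter (fun a => ∃ y ∈ Y, Relation.ReflTransGen (G.dirEdgeIn X) a y)

/-- Unobserved vertices of the induced subgraph `G[A]`: unobserved vertices of `G`
both of whose children lie in `A`. -/
noncomputable def inducedUnobs (G : CausalGraph ν) (A : Finset ν) : Finset ν :=
  G.unobs.filter (fun u => ∀ w, G.E u w → w ∈ A)

/-- The induced subgraph `G[A]`. -/
noncomputable def induced (G : CausalGraph ν) (A : Finset ν) : CausalGraph ν where
  obs := A ∩ G.obs
  unobs := G.inducedUnobs A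
  disj := G.disj.mono Finset.inter_subset_right (Finset.filter_subset _ _)
  E x y := G.E x y ∧ x ∈ (A ∩ G.obs) ∪ G.inducedUnobs A ∧ y ∈ (A ∩ G.obs) ∪ G.inducedUnobs A
  edge_mem := fun x y h => ⟨h.2.1, h.2.2⟩
  acyclic := fun x h => G.acyclic x (Relation.TransGen.mono (by intro a b hab; exact hab.1) x x h)
  unobs_no_parent := fun u hu w hw =>
    G.unobs_no_parent u (Finset.mem_filter.mp hu).1 w hw.1
  unobs_two_children := by
    intro u hu
    have hu' := Finset.mem_filter.mp hu
    obtain ⟨a, b, hab, ha, hb, hiff⟩ := G.unobs_two_children u hu'.1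
    have hEa : G.E u a := (hiff a).mpr (Or.inl rfl)
    have hEb : G.E u b := (hiff b).mpr (Or.inr rfl)
    have haA : a ∈ A := hu'.2 a hEa
    have hbA : b ∈ A := hu'.2 b hEb
    refine ⟨a, b, hab, Finset.mem_inter.mpr ⟨haA, ha⟩, Finset.mem_inter.mpr ⟨hbA, hb⟩, ?_⟩
    intro w
    constructor
    · intro hw; exact (hiff w).mp hw.1
    · rintro (rfl | rfl)
      · exact ⟨hEa, Finset.mem_union.mpr (Or.inr hu),
          Finset.mem_union.mpr (Or.inl (Finset.mem_inter.mpr ⟨haA, ha⟩))⟩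
      · exact ⟨hEb, Finset.mem_union.mpr (Or.inr hu),
          Finset.mem_union.mpr (Or.inl (Finset.mem_inter.mpr ⟨hbA, hb⟩))⟩

/-- `H` is a subgraph of `G`. -/
def IsSubgraph (H G : CausalGraph ν) : Prop :=
  H.obs ⊆ G.obs ∧ H.unobs ⊆ G.unobs ∧ ∀ a b, H.E a b → G.E a b

/-- `H` is an `R`-rooted c-forest: `R` is the root set of `H`, the observed vertex set of
`H` is a single c-component, and every observed vertex has at most one child in `H`. -/
def IsCForest (H : CausalGraph ν) (R : Finset ν) : Prop :=
  H.obs.filter (fun x => ∀ w, ¬ H.E x w) = R ∧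
  H.SingleC H.obs ∧
  ∀ x ∈ H.obs, ∀ w w', H.E x w → H.E x w' → w = w'

end CausalGraph
namespace GidAux

open Finset CausalGraph CausalGraph.SEM

variable {ν : Type} [Fintype ν] [DecidableEq ν] {G : CausalGraph ν}

/-- mix observed and unobserved assignments -/
def mix (G : CausalGraph ν) (v wu : ν → ℕ) : ν → ℕ := fun t => if t ∈ G.unobs then wu t else v t

/-- unobserved assignments -/
noncomputable def uA (M : SEM G) : Finset (ν → ℕ) :=
  Fintype.piFinset (fun x => if x ∈ G.unobs then M.dom x else {0})

lemma oa_dom {M : SEM G} {v : ν → ℕ} (hv : v ∈ M.obsAssign) {t : ν} (ht : t ∈ G.obs) :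
    v t ∈ M.dom t := by
  have := Fintype.mem_piFinset.mp hv t
  simpa [ht] using this

lemma oa_zero {M : SEM G} {v : ν → ℕ} (hv : v ∈ M.obsAssign) {t : ν} (ht : t ∉ G.obs) :
    v t = 0 := by
  have := Fintype.mem_piFinset.mp hv t
  simpa [ht] using this

lemma oa_intro {M : SEM G} {v : ν → ℕ} (h1 : ∀ t ∈ G.obs, v t ∈ M.dom t)
    (h2 : ∀ t, t ∉ G.obs → v t = 0) : v ∈ M.obsAssign := by
  refine Fintype.mem_piFinset.mpr fun t => ?_
  by_cases ht : t ∈ G.obs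
  · simpa [ht] using h1 t ht
  · simpa [ht] using h2 t ht

lemma notmem_unobs_of_obs {t : ν} (ht : t ∈ G.obs) : t ∉ G.unobs :=
  fun h => (Finset.disjoint_left.mp G.disj ht) h

lemma obsAssign_eq_of_dom {M₁ M₂ : SEM G} (h : ∀ i ∈ G.obs, M₁.dom i = M₂.dom i) :
    M₁.obsAssign = M₂.obsAssign := by
  unfold SEM.obsAssign
  congr 1
  funext t
  by_cases ht : t ∈ G.obs <;> simp [ht, h t]

/-- The workhorse representation of `Q` as a sum over unobserved assignments. -/
lemma Q_eq (M : SEM G) {T : Finset ν} (hT : T ⊆ G.obs) {v : ν → ℕ} (hv : v ∈ M.obsAssign) :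
    M.Q T v = ∑ wu ∈ uA M,
      (∏ z ∈ T, M.pO z (v z) (mix G v wu)) * ∏ u ∈ G.unobs, M.pU u (wu u) := by
  unfold SEM.Q
  refine Finset.sum_nbij' (i := fun w => fun t => if t ∈ G.unobs then w t else 0)
    (j := fun wu => mix G v wu) ?_ ?_ ?_ ?_ ?_
  · intro w hw
    rw [Finset.mem_filter] at hw
    obtain ⟨hw1, hw2⟩ := hw
    refine Fintype.mem_piFinset.mpr fun t => ?_
    by_cases ht : t ∈ G.unobs
    · have := Fintype.mem_piFinset.mp hw1 t
      have htv : t ∈ G.verts := Finset.mem_union.mpr (Or.inr ht)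
      simpa [ht, htv] using this
    · simp [ht]
  · intro wu hwu
    rw [Finset.mem_filter]
    constructor
    · refine Fintype.mem_piFinset.mpr fun t => ?_
      by_cases ht : t ∈ G.unobs
      · have := Fintype.mem_piFinset.mp hwu t
        have htv : t ∈ G.verts := Finset.mem_union.mpr (Or.inr ht)
        simpa [mix, ht, htv] using this
      · by_cases hto : t ∈ G.obs
        · have htv : t ∈ G.verts := Finset.mem_union.mpr (Or.inl hto)
          simpa [mix, ht, htv] using oa_dom hv hto
        · have htv : t ∉ G.verts := by
            intro hc
            rcases Finset.mem_union.mp hc with h | h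
            exacts [hto h, ht h]
          simpa [mix, ht, htv] using oa_zero hv hto
    · intro x hx
      simp [mix, notmem_unobs_of_obs hx]
  · intro w hw
    rw [Finset.mem_filter] at hw
    obtain ⟨hw1, hw2⟩ := hw
    funext t
    by_cases ht : t ∈ G.unobs
    · simp [mix, ht]
    · by_cases hto : t ∈ G.obs
      · simp [mix, ht, hw2 t hto]
      · have htv : t ∉ G.verts := by
          intro hc
          rcases Finset.mem_union.mp hc with h | h
          exacts [hto h, ht h]
        have := Fintype.mem_piFinset.mp hw1 t
        have h0 : w t = 0 := by simpa [htv] using this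
        simp [mix, ht, h0, oa_zero hv hto]
  · intro wu hwu
    funext t
    by_cases ht : t ∈ G.unobs
    · simp [mix, ht]
    · have := Fintype.mem_piFinset.mp hwu t
      have h0 : wu t = 0 := by simpa [ht] using this
      simp [mix, ht, h0]
  · intro w hw
    rw [Finset.mem_filter] at hw
    obtain ⟨hw1, hw2⟩ := hw
    have hmixw : mix G v (fun t => if t ∈ G.unobs then w t else 0) = w := by
      funext t
      by_cases ht : t ∈ G.unobs
      · simp [mix, ht]
      · by_cases hto : t ∈ G.obs
        · simp [mix, ht, hw2 t hto]
        · have htv : t ∉ G.verts := by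
            intro hc
            rcases Finset.mem_union.mp hc with h | h
            exacts [hto h, ht h]
          have := Fintype.mem_piFinset.mp hw1 t
          have h0 : w t = 0 := by simpa [htv] using this
          simp [mix, ht, h0, oa_zero hv hto]
    rw [hmixw]
    congr 1
    · exact Finset.prod_congr rfl fun z hz => by rw [hw2 z (hT hz)]
    · exact Finset.prod_congr rfl fun u hu => by simp [hu]

/-- `Q T` only depends on coordinates in `T` and on observed parents of members of `T`. -/
lemma Q_congr (M : SEM G) {T : Finset ν} (hT : T ⊆ G.obs) {v v' : ν → ℕ}
    (hv : v ∈ M.obsAssign) (hv' : v' ∈ M.obsAssign)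
    (h1 : ∀ t ∈ T, v t = v' t)
    (h2 : ∀ t z, z ∈ T → G.E t z → t ∈ G.obs → v t = v' t) :
    M.Q T v = M.Q T v' := by
  rw [Q_eq M hT hv, Q_eq M hT hv']
  refine Finset.sum_congr rfl fun wu _ => ?_
  congr 1
  refine Finset.prod_congr rfl fun z hz => ?_
  rw [h1 z hz]
  refine M.pO_par z (v' z) _ _ fun p hp => ?_
  by_cases hpu : p ∈ G.unobs
  · simp [mix, hpu]
  · have hpv : p ∈ G.verts := (G.edge_mem p z hp).1
    have hpo : p ∈ G.obs := by
      rcases Finset.mem_union.mp hpv with h | h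
      exacts [h, absurd h hpu]
    simp [mix, hpu, h2 p z hz hp hpo]

/-- Summing out a variable with no children in `T`. -/
lemma Q_sum_out (M : SEM G) {T : Finset ν} (hT : T ⊆ G.obs) {t : ν} (htT : t ∈ T)
    (hnos : ∀ z ∈ T, ¬ G.E t z) {v : ν → ℕ} (hv : v ∈ M.obsAssign) (hvt : v t ∈ M.dom t) :
    ∑ c ∈ M.dom t, M.Q T (Function.update v t c) = M.Q (T.erase t) v := by
  have ht : t ∈ G.obs := hT htT
  have hupd : ∀ c ∈ M.dom t, Function.update v t c ∈ M.obsAssign := by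
    intro c hc
    refine oa_intro (fun s hs => ?_) (fun s hs => ?_)
    · by_cases hst : s = t
      · subst hst; simpa using hc
      · rw [Function.update_of_ne hst]; exact oa_dom hv hs
    · have hst : s ≠ t := fun h => hs (h ▸ ht)
      rw [Function.update_of_ne hst]; exact oa_zero hv hs
  have key : ∀ c ∈ M.dom t, ∀ wu ∈ uA M,
      (∏ z ∈ T, M.pO z (Function.update v t c z) (mix G (Function.update v t c) wu))
      = M.pO t c (mix G (Function.update v t c) wu) *
        ∏ z ∈ T.erase t, M.pO z (v z) (mix G v wu) := by
    intro c hc wu hwu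
    rw [← Finset.prod_erase_mul _ _ htT]
    rw [Function.update_self]
    rw [mul_comm]
    congr 1
    refine Finset.prod_congr rfl fun z hz => ?_
    have hzt : z ≠ t := Finset.ne_of_mem_erase hz
    rw [Function.update_of_ne hzt]
    refine M.pO_par z (v z) _ _ fun p hp => ?_
    have hpt : p ≠ t := fun h => hnos z (Finset.mem_of_mem_erase hz) (h ▸ hp)
    by_cases hpu : p ∈ G.unobs
    · simp [mix, hpu]
    · simp [mix, hpu, Function.update_of_ne hpt]
  calc ∑ c ∈ M.dom t, M.Q T (Function.update v t c)
      = ∑ c ∈ M.dom t, ∑ wu ∈ uA M,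
        (M.pO t c (mix G (Function.update v t c) wu) *
          ∏ z ∈ T.erase t, M.pO z (v z) (mix G v wu)) * ∏ u ∈ G.unobs, M.pU u (wu u) := by
        refine Finset.sum_congr rfl fun c hc => ?_
        rw [Q_eq M hT (hupd c hc)]
        exact Finset.sum_congr rfl fun wu hwu => by rw [key c hc wu hwu]
    _ = ∑ wu ∈ uA M, (∑ c ∈ M.dom t, M.pO t c (mix G (Function.update v t c) wu)) *
          (∏ z ∈ T.erase t, M.pO z (v z) (mix G v wu)) * ∏ u ∈ G.unobs, M.pU u (wu u) := by
        rw [Finset.sum_comm]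
        refine Finset.sum_congr rfl fun wu _ => ?_
        rw [Finset.sum_mul, Finset.sum_mul]
    _ = M.Q (T.erase t) v := by
        rw [Q_eq M (fun z hz => hT (Finset.mem_of_mem_erase hz)) hv]
        refine Finset.sum_congr rfl fun wu hwu => ?_
        have h1 : ∑ c ∈ M.dom t, M.pO t c (mix G (Function.update v t c) wu)
            = ∑ c ∈ M.dom t, M.pO t c (mix G v wu) := by
          refine Finset.sum_congr rfl fun c _ => ?_
          refine M.pO_par t c _ _ fun p hp => ?_
          have hpt : p ≠ t := fun h => by
            subst h
            exact G.acyclic p (Relation.TransGen.single hp)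
          by_cases hpu : p ∈ G.unobs
          · simp [mix, hpu]
          · simp [mix, hpu, Function.update_of_ne hpt]
        rw [h1, M.pO_sum t ht, one_mul]

end GidAux
namespace GidAux

open Finset CausalGraph CausalGraph.SEM

variable {ν : Type} [Fintype ν] [DecidableEq ν] {G : CausalGraph ν}

lemma wf_transGen (G : CausalGraph ν) : WellFounded (Relation.TransGen G.E) := by
  have h1 : IsTrans ν (Relation.TransGen G.E) := ⟨fun a b c hab hbc => hab.trans hbc⟩
  have h2 : IsIrrefl ν (Relation.TransGen G.E) := ⟨G.acyclic⟩
  exact Finite.wellFounded_of_trans_of_irrefl _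

lemma wf_E (G : CausalGraph ν) : WellFounded G.E :=
  Subrelation.wf (fun h => Relation.TransGen.single h) (wf_transGen G)

lemma wf_flip_transGen (G : CausalGraph ν) :
    WellFounded (flip (Relation.TransGen G.E)) := by
  have h1 : IsTrans ν (flip (Relation.TransGen G.E)) := ⟨fun a b c hab hbc => hbc.trans hab⟩
  have h2 : IsIrrefl ν (flip (Relation.TransGen G.E)) := ⟨G.acyclic⟩
  exact Finite.wellFounded_of_trans_of_irrefl _

lemma exists_sink (G : CausalGraph ν) (B : Finset ν) (hB : B.Nonempty) :
    ∃ t ∈ B, ∀ c, G.E t c → c ∉ B := by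
  obtain ⟨m, hm, hmin⟩ := (wf_flip_transGen G).has_min (↑B : Set ν) (by
    obtain ⟨b, hb⟩ := hB; exact ⟨b, by simpa using hb⟩)
  refine ⟨m, by simpa using hm, fun c hc hcB => ?_⟩
  exact hmin c (by simpa using hcB) (Relation.TransGen.single hc)

/-- Tian's ancestral-set marginalization lemma. -/
lemma Q_marg (M : SEM G) {A : Finset ν} {T : Finset ν} (hA : A ⊆ T) (hT : T ⊆ G.obs)
    (hcl : ∀ p z, z ∈ A → p ∈ T → G.E p z → p ∈ A)
    {v₀ : ν → ℕ} (hv₀ : v₀ ∈ M.obsAssign) :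
    ∑ v ∈ M.obsAssign.filter (fun v => ∀ s, s ∉ T \ A → v s = v₀ s), M.Q T v
      = M.Q A v₀ := by
  classical
  generalize hn : (T \ A).card = n
  induction n generalizing T with
  | zero =>
    have hTA : T = A := by
      have : T \ A = ∅ := Finset.card_eq_zero.mp hn
      exact Finset.Subset.antisymm (fun t ht => by
        by_contra htA
        exact absurd (Finset.mem_sdiff.mpr ⟨ht, htA⟩) (by simp [this])) hA
    subst hTA
    have hfil : M.obsAssign.filter (fun v => ∀ s, s ∉ T \ T → v s = v₀ s) = {v₀} := by
      ext v
      simp only [Finset.mem_filter, Finset.mem_singleton, Finset.sdiff_self,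
        Finset.notMem_empty, not_false_iff, forall_true_left]
      constructor
      · rintro ⟨hv, h⟩; exact funext h
      · rintro rfl; exact ⟨hv₀, fun s => rfl⟩
    rw [hfil, Finset.sum_singleton]
  | succ n ih =>
    have hne : (T \ A).Nonempty := by
      rw [← Finset.card_pos, hn]; exact Nat.succ_pos n
    obtain ⟨t, htTA, hmax⟩ := exists_sink G (T \ A) hne
    have htT : t ∈ T := (Finset.mem_sdiff.mp htTA).1
    have htA : t ∉ A := (Finset.mem_sdiff.mp htTA).2
    have hto : t ∈ G.obs := hT htT
    have hnos : ∀ z ∈ T, ¬ G.E t z := by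
      intro z hz hE
      by_cases hzA : z ∈ A
      · exact htA (hcl t z hzA htT hE)
      · exact hmax z hE (Finset.mem_sdiff.mpr ⟨hz, hzA⟩)
    set T' := T.erase t with hT'
    have hA' : A ⊆ T' := fun a ha =>
      Finset.mem_erase.mpr ⟨fun h => htA (h ▸ ha), hA ha⟩
    have hT'o : T' ⊆ G.obs := fun a ha => hT (Finset.mem_of_mem_erase ha)
    have hcl' : ∀ p z, z ∈ A → p ∈ T' → G.E p z → p ∈ A := fun p z hz hp hE =>
      hcl p z hz (Finset.mem_of_mem_erase hp) hE
    have hsd : T' \ A = (T \ A).erase t := by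
      ext s
      simp only [Finset.mem_sdiff, Finset.mem_erase, hT']
      tauto
    have hcard : (T' \ A).card = n := by
      rw [hsd, Finset.card_erase_of_mem htTA, hn]; rfl
    have key : ∑ v ∈ M.obsAssign.filter (fun v => ∀ s, s ∉ T \ A → v s = v₀ s), M.Q T v
        = ∑ v' ∈ M.obsAssign.filter (fun v => ∀ s, s ∉ T' \ A → v s = v₀ s), M.Q T' v' := by
      rw [← Finset.sum_fiberwise_of_maps_to (g := fun v => Function.update v t (v₀ t))
        (t := M.obsAssign.filter (fun v => ∀ s, s ∉ T' \ A → v s = v₀ s)) ?_ (fun v => M.Q T v)]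
      · refine Finset.sum_congr rfl fun v' hv' => ?_
        rw [Finset.mem_filter] at hv'
        obtain ⟨hv'oa, hv'fix⟩ := hv'
        have hv't : v' t = v₀ t := hv'fix t (by simp [hsd])
        have hstep : ∑ v ∈ (M.obsAssign.filter (fun v => ∀ s, s ∉ T \ A → v s = v₀ s)).filter
            (fun v => Function.update v t (v₀ t) = v'), M.Q T v
            = ∑ c ∈ M.dom t, M.Q T (Function.update v' t c) := by
          refine Finset.sum_nbij' (i := fun v => v t) (j := fun c => Function.update v' t c)
            ?_ ?_ ?_ ?_ ?_
          · intro v hv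
            simp only [Finset.mem_filter] at hv
            exact oa_dom hv.1.1 hto
          · intro c hc
            simp only [Finset.mem_filter]
            refine ⟨⟨?_, ?_⟩, ?_⟩
            · refine oa_intro (fun s hs => ?_) (fun s hs => ?_)
              · by_cases hst : s = t
                · subst hst; simpa using hc
                · rw [Function.update_of_ne hst]; exact oa_dom hv'oa hs
              · have hst : s ≠ t := fun h => hs (h ▸ hto)
                rw [Function.update_of_ne hst]; exact oa_zero hv'oa hs
            · intro s hs
              have hst : s ≠ t := fun h => hs (h ▸ htTA)
              rw [Function.update_of_ne hst]
              exact hv'fix s (by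
                intro hc'
                exact hs (by
                  rw [hsd] at hc'
                  exact Finset.mem_of_mem_erase hc'))
            · rw [Function.update_idem, ← hv't, Function.update_eq_self]
          · intro v hv
            simp only [Finset.mem_filter] at hv
            show Function.update v' t (v t) = v
            funext s
            by_cases hst : s = t
            · subst hst; simp
            · rw [Function.update_of_ne hst]
              have := congrFun hv.2 s
              rw [Function.update_of_ne hst] at this
              exact this.symm
          · intro c hc
            simp
          · intro v hv
            simp only [Finset.mem_filter] at hv
            show M.Q T v = M.Q T (Function.update v' t (v t))
            congr 1
            funext s
            by_cases hst : s = t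
            · subst hst; simp
            · rw [Function.update_of_ne hst]
              have := congrFun hv.2 s
              rw [Function.update_of_ne hst] at this
              exact this
        rw [hstep]
        have := Q_sum_out M hT htT hnos hv'oa (by rw [hv't]; exact oa_dom hv₀ hto)
        rw [this]
      · intro v hv
        simp only [Finset.mem_filter] at hv ⊢
        obtain ⟨hvoa, hvfix⟩ := hv
        refine ⟨?_, ?_⟩
        · refine oa_intro (fun s hs => ?_) (fun s hs => ?_)
          · by_cases hst : s = t
            · subst hst; simpa using oa_dom hv₀ hto
            · rw [Function.update_of_ne hst]; exact oa_dom hvoa hs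
          · have hst : s ≠ t := fun h => hs (h ▸ hto)
            rw [Function.update_of_ne hst]; exact oa_zero hvoa hs
        · intro s hs
          by_cases hst : s = t
          · subst hst; simp
          · rw [Function.update_of_ne hst]
            refine hvfix s fun hc' => hs ?_
            rw [hsd]
            exact Finset.mem_erase.mpr ⟨hst, hc'⟩
    rw [key]
    exact ih hA' hT'o hcl' hcard

lemma sdiff_sdiff_self {S : Finset ν} (hS : S ⊆ G.obs) : G.obs \ (G.obs \ S) = S := by
  exact Finset.sdiff_sdiff_eq_self hS

/-- `Px` with everything pinned is a point evaluation of `Q`. -/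
lemma Px_single (M : SEM G) {S : Finset ν} (hS : S ⊆ G.obs) {x' y' : ν → ℕ}
    (hx : ∀ i ∈ G.obs \ S, x' i ∈ M.dom i) (hy : ∀ i ∈ S, y' i ∈ M.dom i) :
    M.Px (G.obs \ S) x' S y'
      = M.Q S (fun t => if t ∈ G.obs then (if t ∈ S then y' t else x' t) else 0) := by
  classical
  set v₀ : ν → ℕ := fun t => if t ∈ G.obs then (if t ∈ S then y' t else x' t) else 0 with hv₀def
  have hv₀ : v₀ ∈ M.obsAssign := by
    refine oa_intro (fun s hs => ?_) (fun s hs => ?_)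
    · by_cases hsS : s ∈ S
      · simpa [hv₀def, hs, hsS] using hy s hsS
      · simpa [hv₀def, hs, hsS] using hx s (Finset.mem_sdiff.mpr ⟨hs, hsS⟩)
    · simp [hv₀def, hs]
  have hfil : M.obsAssign.filter
      (fun v => (∀ i ∈ G.obs \ S, v i = x' i) ∧ (∀ i ∈ S, v i = y' i)) = {v₀} := by
    ext v
    simp only [Finset.mem_filter, Finset.mem_singleton]
    constructor
    · rintro ⟨hvoa, h1, h2⟩
      funext s
      by_cases hso : s ∈ G.obs
      · by_cases hsS : s ∈ S
        · simp [hv₀def, hso, hsS, h2 s hsS]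
        · simp [hv₀def, hso, hsS, h1 s (Finset.mem_sdiff.mpr ⟨hso, hsS⟩)]
      · simp [hv₀def, hso, oa_zero hvoa hso]
    · rintro rfl
      refine ⟨hv₀, fun i hi => ?_, fun i hi => ?_⟩
      · rcases Finset.mem_sdiff.mp hi with ⟨h1, h2⟩
        simp [hv₀def, h1, h2]
      · simp [hv₀def, hS hi, hi]
  unfold SEM.Px
  rw [hfil, Finset.sum_singleton, sdiff_sdiff_self hS]

end GidAux
namespace GidAux

open Finset CausalGraph CausalGraph.SEM

variable {ν : Type} [Fintype ν] [DecidableEq ν] {G : CausalGraph ν}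

/-! ### Ancestors within `S` -/

noncomputable def anc (G : CausalGraph ν) (S : Finset ν) (z : ν) : Finset ν :=
  S.filter (fun t => Relation.ReflTransGen (G.dirEdgeIn S) t z)

noncomputable def spar (G : CausalGraph ν) (S : Finset ν) (z : ν) : Finset ν :=
  S.filter (fun p => G.dirEdgeIn S p z)

lemma anc_sub (G : CausalGraph ν) (S : Finset ν) (z : ν) : anc G S z ⊆ S :=
  Finset.filter_subset _ _

lemma mem_anc_self {S : Finset ν} {z : ν} (hz : z ∈ S) : z ∈ anc G S z :=
  Finset.mem_filter.mpr ⟨hz, Relation.ReflTransGen.refl⟩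

lemma spar_mem {S : Finset ν} {z p : ν} (hp : p ∈ spar G S z) : p ∈ S ∧ G.E p z := by
  have := (Finset.mem_filter.mp hp).2
  exact ⟨this.1, this.2.2⟩

lemma anc_step {S : Finset ν} {z t : ν} (ht : t ∈ anc G S z) (htz : t ≠ z) :
    ∃ p, p ∈ spar G S z ∧ t ∈ anc G S p := by
  obtain ⟨htS, hpath⟩ := Finset.mem_filter.mp ht
  rcases Relation.ReflTransGen.cases_tail hpath with h | ⟨c, hc1, hc2⟩
  · exact absurd h.symm htz
  · exact ⟨c, Finset.mem_filter.mpr ⟨hc2.1, hc2⟩, Finset.mem_filter.mpr ⟨htS, hc1⟩⟩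

noncomputable def pick (G : CausalGraph ν) (S : Finset ν) (z t : ν) : ν :=
  if h : ((spar G S z).filter (fun p => t ∈ anc G S p)).Nonempty then h.choose else z

lemma pick_spec {S : Finset ν} {z t : ν} (ht : t ∈ anc G S z) (htz : t ≠ z) :
    pick G S z t ∈ spar G S z ∧ t ∈ anc G S (pick G S z t) := by
  obtain ⟨p, hp1, hp2⟩ := anc_step ht htz
  have hne : ((spar G S z).filter (fun p => t ∈ anc G S p)).Nonempty :=
    ⟨p, Finset.mem_filter.mpr ⟨hp1, hp2⟩⟩
  rw [pick, dif_pos hne]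
  have := hne.choose_spec
  rw [Finset.mem_filter] at this
  exact this

/-! ### Encoding of finitely supported assignments -/

noncomputable def encF (ν : Type) [Fintype ν] [DecidableEq ν] : (ν → ℕ) → ℕ :=
  fun g => Encodable.encode (g ∘ (Fintype.equivFin ν).symm)

noncomputable def decF (ν : Type) [Fintype ν] [DecidableEq ν] : ℕ → (ν → ℕ) :=
  fun m => ((Encodable.decode (α := Fin (Fintype.card ν) → ℕ) m).getD (fun _ => 0)) ∘
    (Fintype.equivFin ν)

lemma decF_encF (g : ν → ℕ) : decF ν (encF ν g) = g := by
  funext t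
  simp [encF, decF, Encodable.encodek]

lemma encF_inj : Function.Injective (encF ν) := by
  intro g g' h
  have := congrArg (decF ν) h
  rwa [decF_encF, decF_encF] at this

def rst (v : ν → ℕ) (T : Finset ν) : ν → ℕ := fun t => if t ∈ T then v t else 0

/-! ### The record-augmented model -/

noncomputable def recSp (M : SEM G) (S : Finset ν) (z : ν) : Finset (ν → ℕ) :=
  Fintype.piFinset (fun t => if t ∈ (anc G S z).erase z then M.dom t else {0})

lemma recSp_nonempty (M : SEM G) (S : Finset ν) (z : ν) : (recSp M S z).Nonempty := by
  unfold recSp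
  rw [Fintype.piFinset_nonempty]
  intro t
  by_cases ht : t ∈ (anc G S z).erase z <;> simp [ht, M.dom_ne t]

lemma recSp_card_pos (M : SEM G) (S : Finset ν) (z : ν) :
    0 < ((recSp M S z).card : ℝ) := by
  exact_mod_cast Finset.card_pos.mpr (recSp_nonempty M S z)

lemma recSp_zero {M : SEM G} {S : Finset ν} {z : ν} {r : ν → ℕ} (hr : r ∈ recSp M S z)
    {t : ν} (ht : t ∉ (anc G S z).erase z) : r t = 0 := by
  have := Fintype.mem_piFinset.mp hr t
  simpa [ht] using this

lemma recSp_dom {M : SEM G} {S : Finset ν} {z : ν} {r : ν → ℕ} (hr : r ∈ recSp M S z)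
    {t : ν} (ht : t ∈ (anc G S z).erase z) : r t ∈ M.dom t := by
  have := Fintype.mem_piFinset.mp hr t
  simpa [ht] using this

lemma recSp_intro {M : SEM G} {S : Finset ν} {z : ν} {r : ν → ℕ}
    (h1 : ∀ t ∈ (anc G S z).erase z, r t ∈ M.dom t)
    (h2 : ∀ t, t ∉ (anc G S z).erase z → r t = 0) : r ∈ recSp M S z := by
  refine Fintype.mem_piFinset.mpr fun t => ?_
  by_cases ht : t ∈ (anc G S z).erase z
  · simpa [ht] using h1 t ht
  · simpa [ht] using h2 t ht

noncomputable def domT (M : SEM G) (S : Finset ν) (z : ν) : Finset ℕ :=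
  ((M.dom z) ×ˢ recSp M S z).image (fun p => encF ν (fun t => if t = z then p.1 else p.2 t))

noncomputable def mrg (G : CausalGraph ν) (S : Finset ν) (z : ν) (pa : ν → ℕ) : ν → ℕ :=
  fun t => if t ∈ (anc G S z).erase z then decF ν (pa (pick G S z t)) t else 0

noncomputable def noiseF (M : SEM G) (S : Finset ν) (e : ℝ) (z : ν) (m : ℕ)
    (pa : ν → ℕ) : ℝ :=
  if mrg G S z pa ∈ recSp M S z then
    (1 - e) * (if rst (decF ν m) ((anc G S z).erase z) = mrg G S z pa then 1 else 0)
      + e / (recSp M S z).card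
  else 1 / (recSp M S z).card

noncomputable def decV (S : Finset ν) (pa : ν → ℕ) : ν → ℕ :=
  fun t => if t ∈ S then decF ν (pa t) t else pa t

lemma noiseF_nonneg (M : SEM G) (S : Finset ν) {e : ℝ} (h0 : 0 ≤ e) (h1 : e ≤ 1)
    (z : ν) (m : ℕ) (pa : ν → ℕ) : 0 ≤ noiseF M S e z m pa := by
  unfold noiseF
  have hN := recSp_card_pos M S z
  split
  · have : (0:ℝ) ≤ (1 - e) * (if rst (decF ν m) ((anc G S z).erase z) = mrg G S z pa
        then 1 else 0) := by
      apply mul_nonneg (by linarith)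
      split <;> norm_num
    have : (0:ℝ) ≤ e / (recSp M S z).card := div_nonneg h0 (le_of_lt hN)
    positivity
  · positivity

lemma noiseF_congr (M : SEM G) (S : Finset ν) (e : ℝ) (z : ν) (m : ℕ) {pa pa' : ν → ℕ}
    (h : ∀ p ∈ spar G S z, pa p = pa' p) :
    noiseF M S e z m pa = noiseF M S e z m pa' := by
  have hmrg : mrg G S z pa = mrg G S z pa' := by
    funext t
    unfold mrg
    split
    · rename_i ht
      have hne : t ≠ z := (Finset.mem_erase.mp ht).1
      have hpk := pick_spec (Finset.mem_of_mem_erase ht) hne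
      rw [h _ hpk.1]
    · rfl
  unfold noiseF
  rw [hmrg]

lemma noiseF_sum (M : SEM G) (S : Finset ν) {e : ℝ} (z : ν) (pa : ν → ℕ) :
    ∑ r ∈ recSp M S z,
      ((1 - e) * (if r = mrg G S z pa then 1 else 0) + e / (recSp M S z).card)
      = if mrg G S z pa ∈ recSp M S z then 1 else (e : ℝ) := by
  have hN := recSp_card_pos M S z
  have hNne : ((recSp M S z).card : ℝ) ≠ 0 := ne_of_gt hN
  rw [Finset.sum_add_distrib]
  rw [← Finset.mul_sum]
  rw [Finset.sum_ite_eq' (recSp M S z) (mrg G S z pa) (fun _ => (1:ℝ))]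
  rw [Finset.sum_const, nsmul_eq_mul]
  split
  · field_simp; ring
  · simp only [mul_zero, zero_add]
    field_simp

/-- The record-augmented SEM. -/
noncomputable def TMdl (M : SEM G) (S : Finset ν) (hS : S ⊆ G.obs) (ε : ℝ) : SEM G where
  dom z := if z ∈ S then domT M S z else M.dom z
  dom_ne z := by
    by_cases hz : z ∈ S
    · simp only [hz, if_pos]
      apply Finset.Nonempty.image
      rw [Finset.nonempty_product]
      exact ⟨M.dom_ne z, recSp_nonempty M S z⟩
    · simpa [hz] using M.dom_ne z
  pU := M.pU
  pU_nonneg := M.pU_nonneg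
  pU_sum u hu := by
    have huS : u ∉ S := fun h => (Finset.disjoint_left.mp G.disj (hS h)) hu
    simpa [huS] using M.pU_sum u hu
  pO z m pa :=
    if z ∈ S then M.pO z (decF ν m z) (decV S pa) * noiseF M S (max (min ε 1) 0) z m pa
    else M.pO z m (decV S pa)
  pO_nonneg z m pa := by
    have h0 : (0:ℝ) ≤ max (min ε 1) 0 := le_max_right _ _
    have h1 : max (min ε 1) 0 ≤ 1 := by
      rcases le_total ε 1 with h | h
      · apply max_le (by rw [min_eq_left h]; exact h) zero_le_one
      · apply max_le (by rw [min_eq_right h]) zero_le_one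
    by_cases hz : z ∈ S
    · simp only [hz, if_pos]
      exact mul_nonneg (M.pO_nonneg _ _ _) (noiseF_nonneg M S h0 h1 _ _ _)
    · simp only [hz, if_neg, ite_false]
      exact M.pO_nonneg _ _ _
  pO_sum z hz pa := by
    by_cases hzS : z ∈ S
    · simp only [hzS, if_pos]
      unfold domT
      rw [Finset.sum_image (fun p hp q hq hpq => by
        have heq := encF_inj hpq
        have h1 : p.1 = q.1 := by
          have := congrFun heq z
          simpa using this
        have hpr : p.2 ∈ recSp M S z := (Finset.mem_product.mp hp).2
        have hqr : q.2 ∈ recSp M S z := (Finset.mem_product.mp hq).2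
        have h2 : p.2 = q.2 := by
          funext t
          by_cases htz : t = z
          · subst htz
            rw [recSp_zero hpr (by simp), recSp_zero hqr (by simp)]
          · have := congrFun heq t
            simpa [htz] using this
        exact Prod.ext h1 h2)]
      rw [Finset.sum_product]
      set e := max (min ε 1) 0 with he
      have hN := recSp_card_pos M S z
      have hNne : ((recSp M S z).card : ℝ) ≠ 0 := ne_of_gt hN
      have inner : ∀ a ∈ M.dom z, (∑ r ∈ recSp M S z,
          M.pO z (decF ν (encF ν fun t => if t = z then a else r t) z) (decV S pa)
            * noiseF M S e z (encF ν fun t => if t = z then a else r t) pa)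
          = M.pO z a (decV S pa) := by
        intro a ha
        have hterm : ∀ r ∈ recSp M S z,
            M.pO z (decF ν (encF ν fun t => if t = z then a else r t) z) (decV S pa)
            * noiseF M S e z (encF ν fun t => if t = z then a else r t) pa
            = M.pO z a (decV S pa) * (if mrg G S z pa ∈ recSp M S z then
                (1 - e) * (if r = mrg G S z pa then 1 else 0) + e / (recSp M S z).card
              else 1 / (recSp M S z).card) := by
          intro r hr
          have hdec : decF ν (encF ν fun t => if t = z then a else r t)
              = fun t => if t = z then a else r t := decF_encF _
          have hrst : rst (fun t => if t = z then a else r t) ((anc G S z).erase z) = r := by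
            funext t
            by_cases ht : t ∈ (anc G S z).erase z
            · have htz : t ≠ z := (Finset.mem_erase.mp ht).1
              simp [rst, ht, htz]
            · simp [rst, ht, (recSp_zero hr ht).symm]
          unfold noiseF
          rw [hdec, hrst]
          simp
        rw [Finset.sum_congr rfl hterm, ← Finset.mul_sum]
        by_cases hmrg : mrg G S z pa ∈ recSp M S z
        · simp only [if_pos hmrg]
          rw [noiseF_sum M S z pa, if_pos hmrg, mul_one]
        · simp only [if_neg hmrg]
          rw [Finset.sum_const, nsmul_eq_mul]
          field_simp
      rw [Finset.sum_congr rfl inner]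
      exact M.pO_sum z hz (decV S pa)
    · simp only [hzS, if_neg, ite_false]
      simpa [hzS] using M.pO_sum z hz (decV S pa)
  pO_par z m pa pa' h := by
    have hdecV : ∀ q, G.E q z → decV S pa q = decV S pa' q := by
      intro q hq
      unfold decV
      rw [h q hq]
    by_cases hzS : z ∈ S
    · simp only [hzS, if_pos]
      rw [M.pO_par z _ _ _ hdecV]
      rw [noiseF_congr M S _ z m (fun p hp => h p (spar_mem hp).2)]
    · simp only [hzS, if_neg, ite_false]
      exact M.pO_par z m _ _ hdecV

end GidAux
namespace GidAux

open Finset CausalGraph CausalGraph.SEM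

variable {ν : Type} [Fintype ν] [DecidableEq ν] {G : CausalGraph ν}

section TMlemmas

variable {S : Finset ν} (M : SEM G) (hS : S ⊆ G.obs) (ε : ℝ)

lemma TM_dom (z : ν) :
    (TMdl M S hS ε).dom z = if z ∈ S then domT M S z else M.dom z := rfl

lemma uA_TM : uA (TMdl M S hS ε) = uA M := by
  unfold uA
  congr 1
  funext t
  by_cases ht : t ∈ G.unobs
  · have htS : t ∉ S := fun h => (Finset.disjoint_left.mp G.disj (hS h)) ht
    simp [ht, TM_dom, htS]
  · simp [ht]

lemma domT_elim {z : ν} {m : ℕ} (hm : m ∈ domT M S z) :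
    ∃ a ∈ M.dom z, ∃ r ∈ recSp M S z, m = encF ν (fun t => if t = z then a else r t) := by
  obtain ⟨p, hp, hpm⟩ := Finset.mem_image.mp hm
  obtain ⟨hp1, hp2⟩ := Finset.mem_product.mp hp
  exact ⟨p.1, hp1, p.2, hp2, hpm.symm⟩

lemma decF_domT_own {z : ν} {m : ℕ} (hm : m ∈ domT M S z) : decF ν m z ∈ M.dom z := by
  obtain ⟨a, ha, r, hr, rfl⟩ := domT_elim M hm
  rw [decF_encF]
  simpa using ha

lemma decF_domT_anc {z : ν} {m : ℕ} (hm : m ∈ domT M S z) {t : ν}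
    (ht : t ∈ (anc G S z).erase z) : decF ν m t ∈ M.dom t := by
  obtain ⟨a, ha, r, hr, rfl⟩ := domT_elim M hm
  rw [decF_encF]
  have htz : t ≠ z := (Finset.mem_erase.mp ht).1
  simpa [htz] using recSp_dom hr ht

lemma decF_domT_zero {z : ν} {m : ℕ} (hm : m ∈ domT M S z) {t : ν} (htz : t ≠ z)
    (ht : t ∉ (anc G S z).erase z) : decF ν m t = 0 := by
  obtain ⟨a, ha, r, hr, rfl⟩ := domT_elim M hm
  rw [decF_encF]
  simpa [htz] using recSp_zero hr ht

lemma decV_oa {v' : ν → ℕ} (hv' : v' ∈ (TMdl M S hS ε).obsAssign) :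
    decV S v' ∈ M.obsAssign := by
  refine oa_intro (fun t ht => ?_) (fun t ht => ?_)
  · by_cases htS : t ∈ S
    · have := oa_dom hv' ht
      rw [TM_dom, if_pos htS] at this
      simpa [decV, htS] using decF_domT_own M this
    · have := oa_dom hv' ht
      rw [TM_dom, if_neg htS] at this
      simpa [decV, htS] using this
  · have htS : t ∉ S := fun h => ht (hS h)
    simpa [decV, htS] using oa_zero hv' ht

lemma decV_mix (hSd : S ⊆ G.obs) (v' wu : ν → ℕ) :
    decV S (mix G v' wu) = mix G (decV S v') wu := by
  funext t
  by_cases ht : t ∈ G.unobs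
  · have htS : t ∉ S := fun h => (Finset.disjoint_left.mp G.disj (hSd h)) ht
    simp [decV, mix, ht, htS]
  · simp [decV, mix, ht]

lemma decF_coord {v' : ν → ℕ} (hv' : v' ∈ (TMdl M S hS ε).obsAssign) {z t : ν}
    (hz : z ∈ S) (ht : t ∈ anc G S z) : decF ν (v' z) t ∈ M.dom t := by
  have hvz := oa_dom hv' (hS hz)
  rw [TM_dom, if_pos hz] at hvz
  by_cases htz : t = z
  · subst htz; exact decF_domT_own M hvz
  · exact decF_domT_anc M hvz (Finset.mem_erase.mpr ⟨htz, ht⟩)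

lemma mrg_mem {v' : ν → ℕ} (hv' : v' ∈ (TMdl M S hS ε).obsAssign) {z : ν} (hz : z ∈ S) :
    mrg G S z v' ∈ recSp M S z := by
  refine recSp_intro (fun t ht => ?_) (fun t ht => ?_)
  · have htz : t ≠ z := (Finset.mem_erase.mp ht).1
    have hta : t ∈ anc G S z := Finset.mem_of_mem_erase ht
    obtain ⟨hp1, hp2⟩ := pick_spec hta htz
    have hpS : pick G S z t ∈ S := (spar_mem hp1).1
    rw [mrg, if_pos ht]
    exact decF_coord M hS ε hv' hpS hp2
  · rw [mrg, if_neg ht]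

lemma noiseF_TM_val {e : ℝ} {v' : ν → ℕ} (hv' : v' ∈ (TMdl M S hS ε).obsAssign) {z : ν}
    (hz : z ∈ S) :
    noiseF M S e z (v' z) v'
      = (1 - e) * (if rst (decF ν (v' z)) ((anc G S z).erase z) = mrg G S z v'
          then 1 else 0) + e / (recSp M S z).card := by
  rw [noiseF, if_pos (mrg_mem M hS ε hv' hz)]

/-- Transfer of `Q` through the record augmentation. -/
lemma Q_TM (A' : Finset ν) (hA' : A' ⊆ G.obs) {v' : ν → ℕ}
    (hv' : v' ∈ (TMdl M S hS ε).obsAssign) :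
    (TMdl M S hS ε).Q A' v'
      = (∏ z ∈ A' ∩ S, noiseF M S (max (min ε 1) 0) z (v' z) v')
        * M.Q A' (decV S v') := by
  rw [Q_eq _ hA' hv', Q_eq M hA' (decV_oa M hS ε hv'), uA_TM]
  rw [Finset.mul_sum]
  refine Finset.sum_congr rfl fun wu hwu => ?_
  have hprod : (∏ z ∈ A', (TMdl M S hS ε).pO z (v' z) (mix G v' wu))
      = (∏ z ∈ A' ∩ S, noiseF M S (max (min ε 1) 0) z (v' z) v')
        * ∏ z ∈ A', M.pO z (decV S v' z) (mix G (decV S v') wu) := by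
    have hfac : ∀ z ∈ A', (TMdl M S hS ε).pO z (v' z) (mix G v' wu)
        = (if z ∈ S then noiseF M S (max (min ε 1) 0) z (v' z) v' else 1)
          * M.pO z (decV S v' z) (mix G (decV S v') wu) := by
      intro z hzA
      by_cases hz : z ∈ S
      · show (if z ∈ S then _ else _) = _
        rw [if_pos hz, if_pos hz]
        rw [decV_mix hS]
        have hnoise : noiseF M S (max (min ε 1) 0) z (v' z) (mix G v' wu)
            = noiseF M S (max (min ε 1) 0) z (v' z) v' := by
          refine noiseF_congr M S _ z _ fun p hp => ?_
          have hpS : p ∈ S := (spar_mem hp).1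
          have hpu : p ∉ G.unobs := notmem_unobs_of_obs (hS hpS)
          simp [mix, hpu]
        rw [hnoise]
        have hown : decF ν (v' z) z = decV S v' z := by simp [decV, hz]
        rw [hown, mul_comm]
      · show (if z ∈ S then _ else _) = _
        rw [if_neg hz, if_neg hz, one_mul]
        rw [decV_mix hS]
        have hown : v' z = decV S v' z := by simp [decV, hz]
        rw [hown]
    rw [Finset.prod_congr rfl hfac, Finset.prod_mul_distrib]
    congr 1
    rw [Finset.prod_ite_mem]
  rw [hprod, mul_assoc]
  rfl

lemma TM_P {v' : ν → ℕ} (hv' : v' ∈ (TMdl M S hS ε).obsAssign) :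
    (TMdl M S hS ε).P v'
      = (∏ z ∈ S, noiseF M S (max (min ε 1) 0) z (v' z) v') * M.P (decV S v') := by
  unfold SEM.P
  rw [Q_TM M hS ε G.obs (le_refl _) hv']
  rw [Finset.inter_eq_right.mpr hS]

lemma TM_positive (hM : M.positive) {e : ℝ} (h0 : 0 < e) (h1 : e < 1) :
    (TMdl M S hS e).positive := by
  intro v' hv'
  rw [TM_P M hS e hv']
  have hc : max (min e 1) 0 = e := by
    rw [min_eq_left h1.le, max_eq_left h0.le]
  apply mul_pos
  · apply Finset.prod_pos
    intro z hz
    rw [noiseF_TM_val M hS e hv' hz, hc]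
    have hN := recSp_card_pos M S z
    have hind : (0:ℝ) ≤ (1 - e) * (if rst (decF ν (v' z)) ((anc G S z).erase z)
        = mrg G S z v' then 1 else 0) := by
      apply mul_nonneg (by linarith)
      split <;> norm_num
    have : (0:ℝ) < e / (recSp M S z).card := div_pos h0 hN
    linarith
  · exact hM _ (decV_oa M hS e hv')

lemma recSp_eq {M₁ M₂ : SEM G} (h : ∀ i ∈ G.obs, M₁.dom i = M₂.dom i) (hS : S ⊆ G.obs)
    (z : ν) : recSp M₁ S z = recSp M₂ S z := by
  unfold recSp
  congr 1
  funext t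
  by_cases ht : t ∈ (anc G S z).erase z
  · have : t ∈ G.obs := hS (anc_sub G S z (Finset.mem_of_mem_erase ht))
    simp [ht, h t this]
  · simp [ht]

lemma domT_eq {M₁ M₂ : SEM G} (h : ∀ i ∈ G.obs, M₁.dom i = M₂.dom i) (hS : S ⊆ G.obs)
    {z : ν} (hz : z ∈ S) : domT M₁ S z = domT M₂ S z := by
  unfold domT
  rw [recSp_eq h hS z, h z (hS hz)]

lemma TM_dom_eq {M₁ M₂ : SEM G} (h : ∀ i ∈ G.obs, M₁.dom i = M₂.dom i) (hS : S ⊆ G.obs)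
    (ε ε' : ℝ) : ∀ i ∈ G.obs, (TMdl M₁ S hS ε).dom i = (TMdl M₂ S hS ε').dom i := by
  intro i hi
  rw [TM_dom, TM_dom]
  by_cases hiS : i ∈ S
  · rw [if_pos hiS, if_pos hiS, domT_eq h hS hiS]
  · rw [if_neg hiS, if_neg hiS, h i hi]

lemma noiseF_eq {M₁ M₂ : SEM G} (h : ∀ i ∈ G.obs, M₁.dom i = M₂.dom i) (hS : S ⊆ G.obs)
    (e : ℝ) (z : ν) (m : ℕ) (pa : ν → ℕ) :
    noiseF M₁ S e z m pa = noiseF M₂ S e z m pa := by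
  unfold noiseF
  rw [recSp_eq h hS z]

end TMlemmas

end GidAux
namespace GidAux

open Finset CausalGraph CausalGraph.SEM

variable {ν : Type} [Fintype ν] [DecidableEq ν] {G : CausalGraph ν}

section Rigidity

variable {S : Finset ν} {M : SEM G} {hS : S ⊆ G.obs} {ε : ℝ}

/-- Exactness of the record carried by `z`. -/
def exact (G : CausalGraph ν) (S : Finset ν) (v' : ν → ℕ) (z : ν) : Prop :=
  rst (decF ν (v' z)) ((anc G S z).erase z) = mrg G S z v'

lemma encF_decF_domT {z : ν} {m : ℕ} (hm : m ∈ domT M S z) : encF ν (decF ν m) = m := by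
  obtain ⟨a, ha, r, hr, rfl⟩ := domT_elim M hm
  rw [decF_encF]

/-- Top-down propagation: exact records truthfully report ancestors' own values. -/
lemma records_truthful {v' : ν → ℕ} (hex : ∀ z ∈ S, exact G S v' z) :
    ∀ z, z ∈ S → ∀ t ∈ (anc G S z).erase z, decF ν (v' z) t = decF ν (v' t) t := by
  intro z
  induction z using (wf_E G).induction with
  | _ z IH =>
    intro hz t ht
    have htz : t ≠ z := (Finset.mem_erase.mp ht).1
    have hta : t ∈ anc G S z := Finset.mem_of_mem_erase ht
    have h1 : decF ν (v' z) t = mrg G S z v' t := by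
      have := congrFun (hex z hz) t
      rwa [rst, if_pos ht] at this
    obtain ⟨hp1, hp2⟩ := pick_spec hta htz
    set p := pick G S z t with hp
    have hpS : p ∈ S := (spar_mem hp1).1
    have hpE : G.E p z := (spar_mem hp1).2
    have h2 : mrg G S z v' t = decF ν (v' p) t := by
      rw [mrg, if_pos ht]
    rw [h1, h2]
    by_cases htp : t = p
    · rw [htp]
    · exact IH p hpE hpS t (Finset.mem_erase.mpr ⟨htp, hp2⟩)

variable {Y : Finset ν} {v₀ : ν → ℕ}

/-- Forward rigidity: exact records pinned at `Y` force the canonical value. -/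
lemma rigidity_forward (hYS : Y ⊆ S)
    (hcov : ∀ t ∈ S, ∃ y ∈ Y, t ∈ anc G S y)
    {v' : ν → ℕ} (hv' : v' ∈ (TMdl M S hS ε).obsAssign)
    (hvy : ∀ y ∈ Y, v' y = encF ν (rst v₀ (anc G S y)))
    (hex : ∀ z ∈ S, exact G S v' z) :
    ∀ z ∈ S, v' z = encF ν (rst v₀ (anc G S z)) := by
  have hdecY : ∀ y ∈ Y, decF ν (v' y) = rst v₀ (anc G S y) := by
    intro y hy
    rw [hvy y hy, decF_encF]
  have own : ∀ t ∈ S, decF ν (v' t) t = v₀ t := by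
    intro t htS
    obtain ⟨y, hy, hty⟩ := hcov t htS
    by_cases hty' : t = y
    · subst hty'
      rw [hdecY t hy, rst, if_pos (mem_anc_self htS)]
    · have := records_truthful hex y (hYS hy) t (Finset.mem_erase.mpr ⟨hty', hty⟩)
      rw [← this, hdecY y hy, rst, if_pos hty]
  intro z hz
  have hvz : v' z ∈ domT M S z := by
    have := oa_dom hv' (hS hz)
    rwa [TM_dom, if_pos hz] at this
  have hdec : decF ν (v' z) = rst v₀ (anc G S z) := by
    funext t
    by_cases htz : t = z
    · subst htz
      rw [own t hz, rst, if_pos (mem_anc_self hz)]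
    · by_cases hta : t ∈ anc G S z
      · have hterase : t ∈ (anc G S z).erase z := Finset.mem_erase.mpr ⟨htz, hta⟩
        rw [records_truthful hex z hz t hterase]
        rw [own t (anc_sub G S z hta), rst, if_pos hta]
      · rw [decF_domT_zero M hvz htz (fun h => hta (Finset.mem_of_mem_erase h)),
          rst, if_neg hta]
  rw [← hdec, encF_decF_domT hvz]

/-- Backward rigidity: the canonical value has exact records. -/
lemma rigidity_backward {v' : ν → ℕ}
    (hcan : ∀ z ∈ S, v' z = encF ν (rst v₀ (anc G S z))) :
    ∀ z ∈ S, exact G S v' z := by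
  intro z hz
  funext t
  by_cases ht : t ∈ (anc G S z).erase z
  · have htz : t ≠ z := (Finset.mem_erase.mp ht).1
    have hta : t ∈ anc G S z := Finset.mem_of_mem_erase ht
    obtain ⟨hp1, hp2⟩ := pick_spec hta htz
    have hpS : pick G S z t ∈ S := (spar_mem hp1).1
    rw [rst, if_pos ht, hcan z hz, decF_encF, mrg, if_pos ht, hcan _ hpS, decF_encF]
    rw [rst, if_pos hta, rst, if_pos hp2]
  · rw [rst, if_neg ht, mrg, if_neg ht]

end Rigidity

section Sstructure

variable {X Y : Finset ν}

lemma mem_ancIn {W : Finset ν} {z : ν} :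
    z ∈ G.ancIn W Y ↔ z ∈ W ∧ ∃ y ∈ Y, Relation.ReflTransGen (G.dirEdgeIn W) z y := by
  unfold CausalGraph.ancIn
  simp [Finset.mem_filter]

lemma path_to_S {y t : ν} (hy : y ∈ Y) {W : Finset ν}
    (hp : Relation.ReflTransGen (G.dirEdgeIn W) t y) :
    Relation.ReflTransGen (G.dirEdgeIn (G.ancIn W Y)) t y := by
  induction hp using Relation.ReflTransGen.head_induction_on with
  | refl => exact Relation.ReflTransGen.refl
  | head h hpath ih =>
    rename_i a c
    have haS : a ∈ G.ancIn W Y :=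
      mem_ancIn.mpr ⟨h.1, y, hy, Relation.ReflTransGen.head h hpath⟩
    have hcS : c ∈ G.ancIn W Y := mem_ancIn.mpr ⟨h.2.1, y, hy, hpath⟩
    exact Relation.ReflTransGen.head ⟨haS, hcS, h.2.2⟩ ih

lemma Y_sub_S (hY : Y ⊆ G.obs) (hXY : Disjoint X Y) : Y ⊆ G.ancIn (G.obs \ X) Y := by
  intro y hy
  have hyW : y ∈ G.obs \ X :=
    Finset.mem_sdiff.mpr ⟨hY hy, fun h => (Finset.disjoint_left.mp hXY h) hy⟩
  exact mem_ancIn.mpr ⟨hyW, y, hy, Relation.ReflTransGen.refl⟩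

lemma S_cover {W : Finset ν} :
    ∀ t ∈ G.ancIn W Y, ∃ y ∈ Y, t ∈ anc G (G.ancIn W Y) y := by
  intro t ht
  obtain ⟨htW, y, hy, hpath⟩ := mem_ancIn.mp ht
  exact ⟨y, hy, Finset.mem_filter.mpr ⟨ht, path_to_S hy hpath⟩⟩

lemma S_closed {W : Finset ν} :
    ∀ p z, z ∈ G.ancIn W Y → p ∈ W → G.E p z → p ∈ G.ancIn W Y := by
  intro p z hz hpW hE
  obtain ⟨hzW, y, hy, hpath⟩ := mem_ancIn.mp hz
  exact mem_ancIn.mpr ⟨hpW, y, hy, Relation.ReflTransGen.head ⟨hpW, hzW, hE⟩ hpath⟩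

end Sstructure

end GidAux
namespace GidAux

open Finset CausalGraph CausalGraph.SEM

variable {ν : Type} [Fintype ν] [DecidableEq ν] {G : CausalGraph ν}

lemma canon_mem_domT (M : SEM G) {S : Finset ν} (hS : S ⊆ G.obs) {v₀ : ν → ℕ}
    (hv₀ : v₀ ∈ M.obsAssign) {t : ν} (ht : t ∈ S) :
    encF ν (rst v₀ (anc G S t)) ∈ domT M S t := by
  unfold domT
  refine Finset.mem_image.mpr ⟨(v₀ t, rst v₀ ((anc G S t).erase t)), ?_, ?_⟩
  · refine Finset.mem_product.mpr ⟨oa_dom hv₀ (hS ht), ?_⟩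
    refine recSp_intro (fun s hs => ?_) (fun s hs => ?_)
    · have hso : s ∈ G.obs := hS (anc_sub G S t (Finset.mem_of_mem_erase hs))
      simpa [rst, hs] using oa_dom hv₀ hso
    · simp [rst, hs]
  · congr 1
    funext s
    by_cases hst : s = t
    · subst hst
      simp [rst, mem_anc_self ht]
    · by_cases hsa : s ∈ (anc G S t).erase t
      · have : s ∈ anc G S t := Finset.mem_of_mem_erase hsa
        simp [rst, hst, hsa, this]
      · have : s ∉ anc G S t := fun h => hsa (Finset.mem_erase.mpr ⟨hst, h⟩)
        simp [rst, hst, hsa, this]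

/-- Pinning `Px` down to a sum of `Q[S]` over the ancestral set `S`. -/
lemma Px_eq_sum_QS (M : SEM G) (X Y : Finset ν) (hX : X ⊆ G.obs)
    (hY : Y ⊆ G.obs) (hXY : Disjoint X Y)
    (x y : ν → ℕ) (c : ν → ℕ) (hc : ∀ t ∈ G.obs, c t ∈ M.dom t) :
    M.Px X x Y y
      = ∑ v₀ ∈ M.obsAssign.filter (fun v =>
          ((∀ i ∈ X, v i = x i) ∧ (∀ i ∈ Y, v i = y i)) ∧
          ∀ t ∈ (G.obs \ X) \ (G.ancIn (G.obs \ X) Y), v t = c t),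
        M.Q (G.ancIn (G.obs \ X) Y) v₀ := by
  classical
  set W := G.obs \ X with hW
  set S := G.ancIn W Y with hSdef
  have hSW : S ⊆ W := Finset.filter_subset _ _
  have hWobs : W ⊆ G.obs := Finset.sdiff_subset
  have hSobs : S ⊆ G.obs := fun s hs => hWobs (hSW hs)
  have hYS : Y ⊆ S := Y_sub_S hY hXY
  unfold SEM.Px
  rw [← Finset.sum_fiberwise_of_maps_to
    (g := fun v => fun t => if t ∈ W \ S then c t else v t)
    (t := M.obsAssign.filter (fun v =>
      ((∀ i ∈ X, v i = x i) ∧ (∀ i ∈ Y, v i = y i)) ∧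
      ∀ t ∈ W \ S, v t = c t)) ?_ (fun v => M.Q W v)]
  · refine Finset.sum_congr rfl fun v₀ hv₀ => ?_
    rw [Finset.mem_filter] at hv₀
    obtain ⟨hv₀oa, ⟨hv₀X, hv₀Y⟩, hv₀c⟩ := hv₀
    have hfib : (M.obsAssign.filter (fun v => (∀ i ∈ X, v i = x i) ∧ ∀ i ∈ Y, v i = y i)).filter
        (fun v => (fun t => if t ∈ W \ S then c t else v t) = v₀)
        = M.obsAssign.filter (fun v => ∀ s, s ∉ W \ S → v s = v₀ s) := by
      ext v
      simp only [Finset.mem_filter]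
      constructor
      · rintro ⟨⟨hvoa, _, _⟩, hρ⟩
        refine ⟨hvoa, fun s hs => ?_⟩
        have := congrFun hρ s
        rwa [if_neg hs] at this
      · rintro ⟨hvoa, hfix⟩
        refine ⟨⟨hvoa, fun i hi => ?_, fun i hi => ?_⟩, ?_⟩
        · have hiW : i ∉ W \ S := fun h =>
            (Finset.mem_sdiff.mp (Finset.mem_sdiff.mp h).1).2 hi
          rw [hfix i hiW]
          exact hv₀X i hi
        · have hiS : i ∈ S := hYS hi
          have hiW : i ∉ W \ S := fun h => (Finset.mem_sdiff.mp h).2 hiS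
          rw [hfix i hiW]
          exact hv₀Y i hi
        · funext s
          by_cases hs : s ∈ W \ S
          · rw [if_pos hs, hv₀c s hs]
          · rw [if_neg hs, hfix s hs]
    rw [hfib]
    exact Q_marg M hSW hWobs (fun p z hz hp hE => S_closed p z hz hp hE) hv₀oa
  · intro v hv
    rw [Finset.mem_filter] at hv ⊢
    obtain ⟨hvoa, hvX, hvY⟩ := hv
    refine ⟨?_, ⟨fun i hi => ?_, fun i hi => ?_⟩, fun t ht => ?_⟩
    · refine oa_intro (fun t ht => ?_) (fun t ht => ?_)
      · by_cases htw : t ∈ W \ S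
        · simpa [htw] using hc t ht
        · simpa [htw] using oa_dom hvoa ht
      · have htw : t ∉ W \ S := fun h =>
          ht (hWobs (Finset.mem_sdiff.mp h).1)
        simpa [htw] using oa_zero hvoa ht
    · have hiW : i ∉ W \ S := fun h =>
        (Finset.mem_sdiff.mp (Finset.mem_sdiff.mp h).1).2 hi
      show (if i ∈ W \ S then c i else v i) = x i
      rw [if_neg hiW]
      exact hvX i hi
    · have hiS : i ∈ S := hYS hi
      have hiW : i ∉ W \ S := fun h => (Finset.mem_sdiff.mp h).2 hiS
      show (if i ∈ W \ S then c i else v i) = y i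
      rw [if_neg hiW]
      exact hvY i hi
    · show (if t ∈ W \ S then c t else v t) = c t
      rw [if_pos ht]

end GidAux

set_option maxHeartbeats 2000000 in
/-- Proposition 3. The causal effect of `X` on `Y` is g-identifiable
from `(𝔸, G)` iff `Q[Anc_Y(G_{V∖X})]` is g-identifiable from `(𝔸, G)`. -/
theorem gid_iff_gid_ancestors
    {ν : Type} [Fintype ν] [DecidableEq ν] (G : CausalGraph ν)
    (𝔸 : Finset (Finset ν)) (h𝔸 : ∀ A ∈ 𝔸, A ⊆ G.obs)
    (X Y : Finset ν) (hX : X ⊆ G.obs) (hY : Y ⊆ G.obs) (hXY : Disjoint X Y) :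
    G.GIdentifiable 𝔸 X Y ↔ G.QGIdentifiable 𝔸 (G.ancIn (G.obs \ X) Y) := by
  classical
  set W := G.obs \ X with hWdef
  set S := G.ancIn W Y with hSdef
  have hSW : S ⊆ W := Finset.filter_subset _ _
  have hWobs : W ⊆ G.obs := Finset.sdiff_subset
  have hSobs : S ⊆ G.obs := fun s hs => hWobs (hSW hs)
  have hYS : Y ⊆ S := GidAux.Y_sub_S hY hXY
  have hXnS : ∀ i ∈ X, i ∉ S := fun i hi hiS =>
    (Finset.mem_sdiff.mp (hSW hiS)).2 hi
  constructor
  · -- forward: identifiability of the effect implies identifiability of Q[S]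
    intro hGid
    intro M1 M2 pos1 pos2 domeq hQag x' y' hx' hy'
    have hOA : M1.obsAssign = M2.obsAssign := GidAux.obsAssign_eq_of_dom domeq
    set v₀ : ν → ℕ := fun t => if t ∈ G.obs then (if t ∈ S then y' t else x' t) else 0
      with hv₀def
    have hv₀oa1 : v₀ ∈ M1.obsAssign := by
      refine GidAux.oa_intro (fun t ht => ?_) (fun t ht => ?_)
      · by_cases hts : t ∈ S
        · simpa [hv₀def, ht, hts] using hy' t hts
        · simpa [hv₀def, ht, hts] using hx' t (Finset.mem_sdiff.mpr ⟨ht, hts⟩)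
      · simp [hv₀def, ht]
    have hv₀oa2 : v₀ ∈ M2.obsAssign := hOA ▸ hv₀oa1
    have hx2' : ∀ i ∈ G.obs \ S, x' i ∈ M2.dom i := fun i hi => by
      rw [← domeq i (Finset.mem_sdiff.mp hi).1]; exact hx' i hi
    have hy2' : ∀ i ∈ S, y' i ∈ M2.dom i := fun i hi => by
      rw [← domeq i (hSobs hi)]; exact hy' i hi
    rw [GidAux.Px_single M1 hSobs hx' hy', GidAux.Px_single M2 hSobs hx2' hy2']
    show M1.Q S v₀ = M2.Q S v₀
    set ystar : ν → ℕ := fun t => GidAux.encF ν (GidAux.rst v₀ (GidAux.anc G S t))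
      with hystar
    have hcov : ∀ t ∈ S, ∃ yy ∈ Y, t ∈ GidAux.anc G S yy := GidAux.S_cover
    set FP : CausalGraph.SEM G → Finset (ν → ℕ) := fun N =>
      ((GidAux.TMdl N S hSobs 0).obsAssign).filter
        (fun v' => (∀ i ∈ X, v' i = x' i) ∧ (∀ i ∈ Y, v' i = ystar i)) with hFP
    set fpol : CausalGraph.SEM G → ℝ → ℝ := fun N u => ∑ v' ∈ FP N,
      (∏ z ∈ S, ((1 - u) * (if GidAux.rst (GidAux.decF ν (v' z)) ((GidAux.anc G S z).erase z)
          = GidAux.mrg G S z v' then (1:ℝ) else 0)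
        + u / ((GidAux.recSp N S z).card : ℝ))) * N.Q W (GidAux.decV S v') with hfpol
    have hpoly : ∀ (N : CausalGraph.SEM G) (e : ℝ),
        (GidAux.TMdl N S hSobs e).Px X x' Y ystar = fpol N (max (min e 1) 0) := by
      intro N e
      unfold CausalGraph.SEM.Px
      rw [show (GidAux.TMdl N S hSobs e).obsAssign = (GidAux.TMdl N S hSobs 0).obsAssign
        from rfl]
      simp only [hfpol]
      refine Finset.sum_congr rfl fun v' hv' => ?_
      have hv'e : v' ∈ (GidAux.TMdl N S hSobs e).obsAssign := (Finset.mem_filter.mp hv').1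
      rw [GidAux.Q_TM N hSobs e W hWobs hv'e, Finset.inter_eq_right.mpr hSW]
      congr 1
      refine Finset.prod_congr rfl fun z hz => ?_
      rw [GidAux.noiseF_TM_val N hSobs e hv'e hz]
    have hcont : ∀ N : CausalGraph.SEM G, Continuous (fpol N) := by
      intro N
      simp only [hfpol]
      apply continuous_finset_sum
      intro v' _
      apply Continuous.mul ?_ continuous_const
      apply continuous_finset_prod
      intro z _
      exact ((continuous_const.sub continuous_id).mul continuous_const).add
        (continuous_id.div_const _)
    have hEq : Set.EqOn (fpol M1) (fpol M2) (Set.Ioo (0:ℝ) 1) := by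
      intro e he
      have h0 : (0:ℝ) < e := he.1
      have h1 : e < 1 := he.2
      have hclamp : max (min e 1) 0 = e := by rw [min_eq_left h1.le, max_eq_left h0.le]
      have hagree : ∀ A ∈ 𝔸, ∀ v' ∈ (GidAux.TMdl M1 S hSobs e).obsAssign,
          (GidAux.TMdl M1 S hSobs e).Q A v' = (GidAux.TMdl M2 S hSobs e).Q A v' := by
        intro A hA v' hv'
        have hv'2 : v' ∈ (GidAux.TMdl M2 S hSobs e).obsAssign := by
          rwa [GidAux.obsAssign_eq_of_dom (GidAux.TM_dom_eq domeq hSobs e e)] at hv'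
        rw [GidAux.Q_TM M1 hSobs e A (h𝔸 A hA) hv', GidAux.Q_TM M2 hSobs e A (h𝔸 A hA) hv'2]
        congr 1
        · exact Finset.prod_congr rfl fun z _ =>
            GidAux.noiseF_eq domeq hSobs _ z (v' z) v'
        · exact hQag A hA _ (GidAux.decV_oa M1 hSobs e hv')
      have hhx : ∀ i ∈ X, x' i ∈ (GidAux.TMdl M1 S hSobs e).dom i := by
        intro i hi
        rw [GidAux.TM_dom, if_neg (hXnS i hi)]
        exact hx' i (Finset.mem_sdiff.mpr ⟨hX hi, hXnS i hi⟩)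
      have hhy : ∀ i ∈ Y, ystar i ∈ (GidAux.TMdl M1 S hSobs e).dom i := by
        intro i hi
        rw [GidAux.TM_dom, if_pos (hYS hi)]
        exact GidAux.canon_mem_domT M1 hSobs hv₀oa1 (hYS hi)
      have hP := hGid (GidAux.TMdl M1 S hSobs e) (GidAux.TMdl M2 S hSobs e)
        (GidAux.TM_positive M1 hSobs pos1 h0 h1) (GidAux.TM_positive M2 hSobs pos2 h0 h1)
        (GidAux.TM_dom_eq domeq hSobs e e) hagree x' ystar hhx hhy
      rw [hpoly M1 e, hpoly M2 e, hclamp] at hP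
      exact hP
    have h00 : fpol M1 0 = fpol M2 0 := by
      have hcl : (0:ℝ) ∈ closure (Set.Ioo (0:ℝ) 1) := by
        rw [closure_Ioo (by norm_num : (0:ℝ) ≠ 1)]
        exact ⟨le_refl 0, by norm_num⟩
      exact (hEq.closure (hcont M1) (hcont M2)) hcl
    have heval : ∀ (N : CausalGraph.SEM G), v₀ ∈ N.obsAssign → fpol N 0 = N.Q S v₀ := by
      intro N hv₀N
      calc fpol N 0
          = ∑ v' ∈ FP N,
            (if (∀ z ∈ S, GidAux.rst (GidAux.decF ν (v' z)) ((GidAux.anc G S z).erase z)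
                = GidAux.mrg G S z v') then N.Q W (GidAux.decV S v') else 0) := by
            simp only [hfpol]
            refine Finset.sum_congr rfl fun v' _ => ?_
            simp only [sub_zero, one_mul, zero_div, add_zero]
            rw [Finset.prod_boole, ite_mul, one_mul, zero_mul]
            by_cases h : ∀ z ∈ S, GidAux.rst (GidAux.decF ν (v' z))
                ((GidAux.anc G S z).erase z) = GidAux.mrg G S z v' <;>
              simp [h]
        _ = ∑ v' ∈ (FP N).filter (fun v' => ∀ z ∈ S,
              GidAux.rst (GidAux.decF ν (v' z)) ((GidAux.anc G S z).erase z)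
                = GidAux.mrg G S z v'), N.Q W (GidAux.decV S v') :=
            (Finset.sum_filter _ _).symm
        _ = ∑ v ∈ N.obsAssign.filter (fun v => ∀ s, s ∉ W \ S → v s = v₀ s), N.Q W v := by
            refine Finset.sum_nbij' (i := fun v' => GidAux.decV S v')
              (j := fun v => fun t => if t ∈ S then ystar t else v t) ?_ ?_ ?_ ?_ ?_
            · intro v' hv'
              rw [Finset.mem_filter] at hv'
              obtain ⟨hv'FP, hex⟩ := hv'
              rw [hFP, Finset.mem_filter] at hv'FP
              obtain ⟨hv'0, hv'X, hv'Y⟩ := hv'FP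
              have hcanon : ∀ z ∈ S, v' z = GidAux.encF ν (GidAux.rst v₀ (GidAux.anc G S z)) :=
                GidAux.rigidity_forward hYS hcov hv'0
                  (fun yy hyy => by rw [hv'Y yy hyy]) hex
              rw [Finset.mem_filter]
              refine ⟨GidAux.decV_oa N hSobs 0 hv'0, fun s hs => ?_⟩
              by_cases hsS : s ∈ S
              · show (if s ∈ S then GidAux.decF ν (v' s) s else v' s) = v₀ s
                rw [if_pos hsS, hcanon s hsS, GidAux.decF_encF, GidAux.rst,
                  if_pos (GidAux.mem_anc_self hsS)]
              · show (if s ∈ S then GidAux.decF ν (v' s) s else v' s) = v₀ s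
                rw [if_neg hsS]
                by_cases hso : s ∈ G.obs
                · have hsX : s ∈ X := by
                    by_contra hsX
                    exact hs (Finset.mem_sdiff.mpr ⟨Finset.mem_sdiff.mpr ⟨hso, hsX⟩, hsS⟩)
                  rw [hv'X s hsX, hv₀def]
                  simp [hso, hsS]
                · rw [GidAux.oa_zero hv'0 hso, hv₀def]
                  simp [hso]
            · intro v hv
              rw [Finset.mem_filter] at hv
              obtain ⟨hvoa, hfix⟩ := hv
              have hvS : ∀ t ∈ S, v t = v₀ t := fun t ht =>
                hfix t (fun h => (Finset.mem_sdiff.mp h).2 ht)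
              have hcan : ∀ z ∈ S, (fun t => if t ∈ S then ystar t else v t) z
                  = GidAux.encF ν (GidAux.rst v₀ (GidAux.anc G S z)) := by
                intro z hz
                show (if z ∈ S then ystar z else v z) = _
                rw [if_pos hz, hystar]
              rw [Finset.mem_filter]
              constructor
              · rw [hFP, Finset.mem_filter]
                refine ⟨?_, fun i hi => ?_, fun i hi => ?_⟩
                · refine GidAux.oa_intro (fun t ht => ?_) (fun t ht => ?_)
                  · show (if t ∈ S then ystar t else v t) ∈ (GidAux.TMdl N S hSobs 0).dom t
                    by_cases hts : t ∈ S
                    · rw [if_pos hts, GidAux.TM_dom, if_pos hts]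
                      exact GidAux.canon_mem_domT N hSobs hv₀N hts
                    · rw [if_neg hts, GidAux.TM_dom, if_neg hts]
                      exact GidAux.oa_dom hvoa ht
                  · have hts : t ∉ S := fun h => ht (hSobs h)
                    show (if t ∈ S then ystar t else v t) = 0
                    rw [if_neg hts]
                    exact GidAux.oa_zero hvoa ht
                · show (if i ∈ S then ystar i else v i) = x' i
                  rw [if_neg (hXnS i hi)]
                  have hiW : i ∉ W \ S := fun h =>
                    (Finset.mem_sdiff.mp (Finset.mem_sdiff.mp h).1).2 hi
                  rw [hfix i hiW, hv₀def]
                  simp [hX hi, hXnS i hi]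
                · show (if i ∈ S then ystar i else v i) = ystar i
                  rw [if_pos (hYS hi)]
              · exact GidAux.rigidity_backward hcan
            · intro v' hv'
              rw [Finset.mem_filter] at hv'
              obtain ⟨hv'FP, hex⟩ := hv'
              rw [hFP, Finset.mem_filter] at hv'FP
              obtain ⟨hv'0, hv'X, hv'Y⟩ := hv'FP
              have hcanon : ∀ z ∈ S, v' z = GidAux.encF ν (GidAux.rst v₀ (GidAux.anc G S z)) :=
                GidAux.rigidity_forward hYS hcov hv'0
                  (fun yy hyy => by rw [hv'Y yy hyy]) hex
              funext t
              show (if t ∈ S then ystar t else GidAux.decV S v' t) = v' t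
              by_cases hts : t ∈ S
              · rw [if_pos hts]
                exact (hcanon t hts).symm
              · rw [if_neg hts]
                show (if t ∈ S then GidAux.decF ν (v' t) t else v' t) = v' t
                rw [if_neg hts]
            · intro v hv
              rw [Finset.mem_filter] at hv
              obtain ⟨hvoa, hfix⟩ := hv
              have hvS : ∀ t ∈ S, v t = v₀ t := fun t ht =>
                hfix t (fun h => (Finset.mem_sdiff.mp h).2 ht)
              funext t
              show (if t ∈ S then GidAux.decF ν (if t ∈ S then ystar t else v t) t
                  else (if t ∈ S then ystar t else v t)) = v t
              by_cases hts : t ∈ S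
              · rw [if_pos hts, if_pos hts]
                show GidAux.decF ν (GidAux.encF ν (GidAux.rst v₀ (GidAux.anc G S t))) t = v t
                rw [GidAux.decF_encF, GidAux.rst, if_pos (GidAux.mem_anc_self hts), hvS t hts]
              · rw [if_neg hts, if_neg hts]
            · intro v' _
              rfl
        _ = N.Q S v₀ := GidAux.Q_marg N hSW hWobs
            (fun p z hz hp hE => GidAux.S_closed p z hz hp hE) hv₀N
    rw [← heval M1 hv₀oa1, ← heval M2 hv₀oa2, h00]
  · -- backward: identifiability of Q[S] implies identifiability of the effect
    intro hQid
    intro M1 M2 pos1 pos2 domeq hQag x y hx hy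
    have hOA : M1.obsAssign = M2.obsAssign := GidAux.obsAssign_eq_of_dom domeq
    set c : ν → ℕ := fun t => (M1.dom_ne t).choose with hcdef
    have hc1 : ∀ t ∈ G.obs, c t ∈ M1.dom t := fun t _ => (M1.dom_ne t).choose_spec
    have hc2 : ∀ t ∈ G.obs, c t ∈ M2.dom t := fun t ht => by
      rw [← domeq t ht]; exact hc1 t ht
    rw [GidAux.Px_eq_sum_QS M1 X Y hX hY hXY x y c hc1,
      GidAux.Px_eq_sum_QS M2 X Y hX hY hXY x y c hc2, ← hOA]
    refine Finset.sum_congr rfl fun v₀ hv₀ => ?_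
    have hv₀oa : v₀ ∈ M1.obsAssign := (Finset.mem_filter.mp hv₀).1
    have hx'' : ∀ i ∈ G.obs \ S, v₀ i ∈ M1.dom i := fun i hi =>
      GidAux.oa_dom hv₀oa (Finset.mem_sdiff.mp hi).1
    have hy'' : ∀ i ∈ S, v₀ i ∈ M1.dom i := fun i hi => GidAux.oa_dom hv₀oa (hSobs hi)
    have hx2'' : ∀ i ∈ G.obs \ S, v₀ i ∈ M2.dom i := fun i hi => by
      rw [← domeq i (Finset.mem_sdiff.mp hi).1]; exact hx'' i hi
    have hy2'' : ∀ i ∈ S, v₀ i ∈ M2.dom i := fun i hi => by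
      rw [← domeq i (hSobs hi)]; exact hy'' i hi
    have hpq := hQid M1 M2 pos1 pos2 domeq hQag v₀ v₀ hx'' hy''
    rw [GidAux.Px_single M1 hSobs hx'' hy'', GidAux.Px_single M2 hSobs hx2'' hy2''] at hpq
    have hcanon : (fun t => if t ∈ G.obs then (if t ∈ S then v₀ t else v₀ t) else 0) = v₀ := by
      funext t
      by_cases ht : t ∈ G.obs
      · simp [ht]
      · simp [ht, (GidAux.oa_zero hv₀oa ht).symm]
    rw [hcanon] at hpq
    exact hpq
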